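/- Suppose (Z, T) is independent of (W, C), Z is integrable, and t1 < t2 are reals with S(s) > 0 for all s ∈ [t1, t2). Then for every bounded Borel measurable function φ : ℝ → ℝ, the marked counting process and its compensator have equal means: E[φ(T) · Z · 1{t1 ≤ T < t2} · 1{W ≤ T ≤ C}] = E[∫_{[t1, t2)} φ(s) · 1{W ≤ s ≤ X} · h(s) dΛ_T(s)], where the inner integral is over s with respect to the cumulative hazard measure Λ_T. -/

import Mathlib

open MeasureTheory ProbabilityTheory
open scoped ENNReal NNReal

/-- Under independence of `(Z, T)` from `(W, C)`, integrability of `Z` and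
positivity of `S` on `[t1, t2)`, the marked counting process and its compensator have
equal means: for every bounded Borel `φ`,
`E[φ(T) Z 1{t1 ≤ T < t2} 1{W ≤ T ≤ C}]
  = E[∫_{[t1,t2)} φ(s) 1{W ≤ s ≤ X} h(s) dΛ_T(s)]`,
where `Λ_T` is the cumulative hazard measure (density `1/S` w.r.t. the law of `T`) and
`h ∘ T` is a version of `E[Z | σ(T)]`. -/
theorem marked_counting_process_compensator_mean
    {Ω : Type*} [MeasurableSpace Ω] (μ : Measure Ω) [IsProbabilityMeasure μ]
    (T C W Z : Ω → ℝ) (hT : Measurable T) (hC : Measurable C) (hW : Measurable W)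
    (hZmeas : Measurable Z)
    (hindep : IndepFun (fun ω => (Z ω, T ω)) (fun ω => (W ω, C ω)) μ)
    (hZint : Integrable Z μ)
    (S : ℝ → ℝ) (hS : ∀ t, S t = (μ {ω | t ≤ T ω}).toReal)
    (ΛT : Measure ℝ)
    (hΛT : ΛT = (Measure.map T μ).withDensity (fun s => ENNReal.ofReal (1 / S s)))
    (h : ℝ → ℝ) (hh : Measurable h)
    (hcond : μ[Z | MeasurableSpace.comap T inferInstance] =ᵐ[μ] fun ω => h (T ω))
    (t1 t2 : ℝ) (h12 : t1 < t2) (hSpos : ∀ s ∈ Set.Ico t1 t2, 0 < S s)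
    (φ : ℝ → ℝ) (hφ : Measurable φ) (M : ℝ) (hφbd : ∀ x, |φ x| ≤ M) :
    ∫ ω, φ (T ω) * Z ω
        * Set.indicator {ω' | t1 ≤ T ω' ∧ T ω' < t2} (fun _ => (1 : ℝ)) ω
        * Set.indicator {ω' | W ω' ≤ T ω' ∧ T ω' ≤ C ω'} (fun _ => (1 : ℝ)) ω ∂μ
      = ∫ ω, (∫ s in Set.Ico t1 t2,
          φ s * Set.indicator (Set.Icc (W ω) (min (T ω) (C ω))) (fun _ => (1 : ℝ)) s
            * h s ∂ΛT) ∂μ := by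
  have hM0 : 0 ≤ M := le_trans (abs_nonneg _) (hφbd 0)
  have hZT : Measurable fun ω => (Z ω, T ω) := hZmeas.prodMk hT
  have hWC : Measurable fun ω => (W ω, C ω) := hW.prodMk hC
  have hpair : Measurable fun ω => ((Z ω, T ω), (W ω, C ω)) := hZT.prodMk hWC
  set ν₁ : Measure (ℝ × ℝ) := μ.map (fun ω => (Z ω, T ω)) with hν₁def
  set ν₂ : Measure (ℝ × ℝ) := μ.map (fun ω => (W ω, C ω)) with hν₂def
  set μT : Measure ℝ := μ.map T with hμTdef
  haveI : IsProbabilityMeasure ν₁ := Measure.isProbabilityMeasure_map hZT.aemeasurable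
  haveI : IsProbabilityMeasure ν₂ := Measure.isProbabilityMeasure_map hWC.aemeasurable
  haveI : IsProbabilityMeasure μT := Measure.isProbabilityMeasure_map hT.aemeasurable
  have hmap : μ.map (fun ω => ((Z ω, T ω), (W ω, C ω))) = ν₁.prod ν₂ :=
    (indepFun_iff_map_prod_eq_prod_map_map hZT.aemeasurable hWC.aemeasurable).mp hindep
  -- the set B t and the function G
  set B : ℝ → Set (ℝ × ℝ) := fun t => {q | q.1 ≤ t ∧ t ≤ q.2} with hBdef
  have hBmeas : ∀ t, MeasurableSet (B t) := fun t =>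
    (measurableSet_le measurable_fst measurable_const).inter
      (measurableSet_le measurable_const measurable_snd)
  set G : ℝ → ℝ := fun t => (ν₂ (B t)).toReal with hGdef
  have hGmeas : Measurable G := by
    have hsB : MeasurableSet {p : ℝ × (ℝ × ℝ) | p.2.1 ≤ p.1 ∧ p.1 ≤ p.2.2} :=
      (measurableSet_le measurable_snd.fst measurable_fst).inter
        (measurableSet_le measurable_fst measurable_snd.snd)
    exact (measurable_measure_prodMk_left (ν := ν₂) hsB).ennreal_toReal
  have hG0 : ∀ t, 0 ≤ G t := fun t => ENNReal.toReal_nonneg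
  have hG1 : ∀ t, G t ≤ 1 := by
    intro t
    have h1 : ν₂ (B t) ≤ 1 := prob_le_one
    calc (ν₂ (B t)).toReal ≤ (1 : ℝ≥0∞).toReal :=
          ENNReal.toReal_mono ENNReal.one_ne_top h1
      _ = 1 := by simp
  -- S is antitone hence measurable
  have hSanti : Antitone S := by
    intro a b hab
    rw [hS a, hS b]
    exact ENNReal.toReal_mono (measure_ne_top _ _)
      (measure_mono fun ω hω => le_trans hab hω)
  have hSmeas : Measurable S := hSanti.measurable
  have hST : ∀ s, μ {ω | s ≤ T ω} = ENNReal.ofReal (S s) := by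
    intro s
    rw [hS s, ENNReal.ofReal_toReal (measure_ne_top _ _)]
  -- key independence identity
  have hEmeas : ∀ s : ℝ, MeasurableSet {ω | W ω ≤ s ∧ s ≤ T ω ∧ s ≤ C ω} := fun s =>
    (measurableSet_le hW measurable_const).inter
      ((measurableSet_le measurable_const hT).inter (measurableSet_le measurable_const hC))
  have hkey : ∀ s : ℝ, μ {ω | W ω ≤ s ∧ s ≤ T ω ∧ s ≤ C ω}
      = ν₂ (B s) * μ {ω | s ≤ T ω} := by
    intro s
    have hA : MeasurableSet {p : ℝ × ℝ | s ≤ p.2} :=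
      measurableSet_le measurable_const measurable_snd
    have hset : {ω | W ω ≤ s ∧ s ≤ T ω ∧ s ≤ C ω}
        = (fun ω => ((Z ω, T ω), (W ω, C ω))) ⁻¹' ({p : ℝ × ℝ | s ≤ p.2} ×ˢ B s) := by
      ext ω
      simp only [Set.mem_setOf_eq, Set.mem_preimage, Set.mem_prod, hBdef]
      tauto
    rw [hset, ← Measure.map_apply hpair (hA.prod (hBmeas s)), hmap, Measure.prod_prod]
    have hν₁A : ν₁ {p : ℝ × ℝ | s ≤ p.2} = μ {ω | s ≤ T ω} := by
      rw [hν₁def, Measure.map_apply hZT hA]; rfl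
    rw [hν₁A, mul_comm]
  -- integrability of h w.r.t. μT
  have hhT_int : Integrable (fun ω => h (T ω)) μ := integrable_condExp.congr hcond
  have hh_int : Integrable h μT := by
    rw [hμTdef]
    exact (integrable_map_measure hh.aestronglyMeasurable hT.aemeasurable).mpr hhT_int
  -- the function F on the product space
  set F : (ℝ × ℝ) × (ℝ × ℝ) → ℝ := fun q =>
    φ q.1.2 * q.1.1 * Set.indicator (Set.Ico t1 t2) (fun _ => (1 : ℝ)) q.1.2
      * Set.indicator {r : (ℝ × ℝ) × (ℝ × ℝ) | r.2.1 ≤ r.1.2 ∧ r.1.2 ≤ r.2.2}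
          (fun _ => (1 : ℝ)) q with hFdef
  have hCset : MeasurableSet {r : (ℝ × ℝ) × (ℝ × ℝ) | r.2.1 ≤ r.1.2 ∧ r.1.2 ≤ r.2.2} :=
    (measurableSet_le measurable_snd.fst measurable_fst.snd).inter
      (measurableSet_le measurable_fst.snd measurable_snd.snd)
  have hFmeas : Measurable F := by
    refine (((hφ.comp measurable_fst.snd).mul measurable_fst.fst).mul
      ((measurable_const.indicator measurableSet_Ico).comp measurable_fst.snd)).mul
      (measurable_const.indicator hCset)
  have hFcomp : ∀ ω, φ (T ω) * Z ω
      * Set.indicator {ω' | t1 ≤ T ω' ∧ T ω' < t2} (fun _ => (1 : ℝ)) ω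
      * Set.indicator {ω' | W ω' ≤ T ω' ∧ T ω' ≤ C ω'} (fun _ => (1 : ℝ)) ω
      = F ((Z ω, T ω), (W ω, C ω)) := by
    intro ω
    simp only [hFdef, Set.indicator_apply, Set.mem_setOf_eq, Set.mem_Ico]
  have habs_ind : ∀ {α : Type} (A : Set α) (x : α),
      |Set.indicator A (fun _ => (1 : ℝ)) x| ≤ 1 := by
    intro α A x
    by_cases hx : x ∈ A <;> simp [hx]
  -- integrability of the original integrand
  have hint0 : Integrable (fun ω => F ((Z ω, T ω), (W ω, C ω))) μ := by
    refine Integrable.mono' (hZint.abs.const_mul M)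
      ((hFmeas.comp hpair).aestronglyMeasurable) ?_
    refine Filter.Eventually.of_forall fun ω => ?_
    have h1 := habs_ind (Set.Ico t1 t2) (T ω)
    have h2 := habs_ind {r : (ℝ × ℝ) × (ℝ × ℝ) | r.2.1 ≤ r.1.2 ∧ r.1.2 ≤ r.2.2}
      ((Z ω, T ω), (W ω, C ω))
    have h3 := hφbd (T ω)
    simp only [hFdef, Real.norm_eq_abs]
    calc |φ (T ω) * Z ω * Set.indicator (Set.Ico t1 t2) (fun _ => (1:ℝ)) (T ω)
          * Set.indicator {r : (ℝ × ℝ) × (ℝ × ℝ) | r.2.1 ≤ r.1.2 ∧ r.1.2 ≤ r.2.2}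
              (fun _ => (1:ℝ)) ((Z ω, T ω), (W ω, C ω))|
        = |φ (T ω)| * |Z ω| * |Set.indicator (Set.Ico t1 t2) (fun _ => (1:ℝ)) (T ω)|
          * |Set.indicator {r : (ℝ × ℝ) × (ℝ × ℝ) | r.2.1 ≤ r.1.2 ∧ r.1.2 ≤ r.2.2}
              (fun _ => (1:ℝ)) ((Z ω, T ω), (W ω, C ω))| := by
            rw [abs_mul, abs_mul, abs_mul]
      _ ≤ M * |Z ω| * 1 * 1 := by gcongr
      _ = M * |Z ω| := by ring
  have hFint : Integrable F (ν₁.prod ν₂) := by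
    rw [← hmap]
    exact (integrable_map_measure hFmeas.aestronglyMeasurable hpair.aemeasurable).mpr hint0
  -- Step 1: push to the product measure
  have E1 : ∫ ω, F ((Z ω, T ω), (W ω, C ω)) ∂μ = ∫ q, F q ∂(ν₁.prod ν₂) := by
    rw [← hmap]
    exact (integral_map hpair.aemeasurable hFmeas.aestronglyMeasurable).symm
  -- Step 2: Fubini on the product
  have E3 : ∫ q, F q ∂(ν₁.prod ν₂)
      = ∫ p, φ p.2 * p.1 * Set.indicator (Set.Ico t1 t2) (fun _ => (1:ℝ)) p.2 * G p.2 ∂ν₁ := by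
    rw [integral_prod F hFint]
    refine integral_congr_ae (Filter.Eventually.of_forall fun p => ?_)
    show (∫ q, F (p, q) ∂ν₂)
        = φ p.2 * p.1 * Set.indicator (Set.Ico t1 t2) (fun _ => (1:ℝ)) p.2 * G p.2
    have hfq : (fun q : ℝ × ℝ => F (p, q))
        = fun q => (φ p.2 * p.1 * Set.indicator (Set.Ico t1 t2) (fun _ => (1:ℝ)) p.2)
            * Set.indicator (B p.2) (fun _ => (1:ℝ)) q := by
      funext q
      by_cases hq : q.1 ≤ p.2 ∧ p.2 ≤ q.2
      · simp [hFdef, hBdef, Set.indicator_apply, hq]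
      · simp [hFdef, hBdef, Set.indicator_apply, hq]
    rw [hfq, integral_const_mul, integral_indicator_const (1:ℝ) (hBmeas p.2)]
    simp only [hGdef, smul_eq_mul, mul_one, Measure.real]
  -- Step 3: back to Ω
  have hmeas4 : Measurable fun p : ℝ × ℝ =>
      φ p.2 * p.1 * Set.indicator (Set.Ico t1 t2) (fun _ => (1:ℝ)) p.2 * G p.2 :=
    (((hφ.comp measurable_snd).mul measurable_fst).mul
      ((measurable_const.indicator measurableSet_Ico).comp measurable_snd)).mul
      (hGmeas.comp measurable_snd)
  have E4 : ∫ p, φ p.2 * p.1 * Set.indicator (Set.Ico t1 t2) (fun _ => (1:ℝ)) p.2 * G p.2 ∂ν₁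
      = ∫ ω, φ (T ω) * Z ω * Set.indicator (Set.Ico t1 t2) (fun _ => (1:ℝ)) (T ω)
          * G (T ω) ∂μ := by
    rw [hν₁def]
    exact integral_map hZT.aemeasurable hmeas4.aestronglyMeasurable
  -- Step 4: conditional expectation
  set ψ : ℝ → ℝ := fun t =>
    φ t * Set.indicator (Set.Ico t1 t2) (fun _ => (1:ℝ)) t * G t with hψdef
  have hψmeas : Measurable ψ :=
    (hφ.mul (measurable_const.indicator measurableSet_Ico)).mul hGmeas
  have hψbd : ∀ t, |ψ t| ≤ M := by
    intro t
    have h1 := habs_ind (Set.Ico t1 t2) t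
    have h3 := hφbd t
    calc |ψ t| = |φ t| * |Set.indicator (Set.Ico t1 t2) (fun _ => (1:ℝ)) t| * |G t| := by
          rw [hψdef]; rw [abs_mul, abs_mul]
      _ ≤ M * 1 * 1 := by
          have hGt : |G t| ≤ 1 := by rw [abs_of_nonneg (hG0 t)]; exact hG1 t
          gcongr
      _ = M := by ring
  set f : Ω → ℝ := fun ω => ψ (T ω) with hfdef
  have hm : MeasurableSpace.comap T inferInstance ≤ _ := hT.comap_le
  have hfm : StronglyMeasurable[MeasurableSpace.comap T inferInstance] f :=
    (hψmeas.comp (Measurable.of_comap_le le_rfl)).stronglyMeasurable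
  have hfZint : Integrable (f * Z) μ := by
    refine Integrable.mono' (hZint.abs.const_mul M)
      (((hψmeas.comp hT).mul hZmeas).aestronglyMeasurable) ?_
    refine Filter.Eventually.of_forall fun ω => ?_
    simp only [Pi.mul_apply, Real.norm_eq_abs, abs_mul]
    exact mul_le_mul_of_nonneg_right (hψbd (T ω)) (abs_nonneg _)
  haveI : SigmaFinite (μ.trim hm) := by
    have : IsFiniteMeasure (μ.trim hm) := isFiniteMeasure_trim hm
    infer_instance
  have E6 : ∫ ω, f ω * Z ω ∂μ = ∫ ω, f ω * h (T ω) ∂μ := by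
    have h2 : μ[f * Z|MeasurableSpace.comap T inferInstance]
        =ᵐ[μ] f * μ[Z|MeasurableSpace.comap T inferInstance] :=
      condExp_mul_of_stronglyMeasurable_left hfm hfZint hZint
    have h3 : f * μ[Z|MeasurableSpace.comap T inferInstance]
        =ᵐ[μ] fun ω => f ω * h (T ω) :=
      hcond.mono fun ω hω => by simp only [Pi.mul_apply, hω]
    calc ∫ ω, f ω * Z ω ∂μ = ∫ ω, (f * Z) ω ∂μ := rfl
      _ = ∫ ω, (μ[f * Z|MeasurableSpace.comap T inferInstance]) ω ∂μ :=
          (integral_condExp hm).symm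
      _ = ∫ ω, f ω * h (T ω) ∂μ := integral_congr_ae (h2.trans h3)
  have E7 : ∫ ω, f ω * h (T ω) ∂μ = ∫ t, ψ t * h t ∂μT := by
    rw [hμTdef]
    exact (integral_map hT.aemeasurable ((hψmeas.mul hh).aestronglyMeasurable)).symm
  have E8 : ∫ t, ψ t * h t ∂μT = ∫ t in Set.Ico t1 t2, φ t * G t * h t ∂μT := by
    have hpt : ∀ t, ψ t * h t
        = Set.indicator (Set.Ico t1 t2) (fun t => φ t * G t * h t) t := by
      intro t
      by_cases ht : t ∈ Set.Ico t1 t2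
      · simp only [hψdef, Set.indicator_of_mem ht]; ring
      · simp only [hψdef, Set.indicator_of_notMem ht]
        simp [Set.indicator_of_notMem ht]
    simp_rw [hpt]
    exact integral_indicator measurableSet_Ico
  -- LHS summary
  have hLHS : ∫ ω, φ (T ω) * Z ω
      * Set.indicator {ω' | t1 ≤ T ω' ∧ T ω' < t2} (fun _ => (1 : ℝ)) ω
      * Set.indicator {ω' | W ω' ≤ T ω' ∧ T ω' ≤ C ω'} (fun _ => (1 : ℝ)) ω ∂μ
      = ∫ t in Set.Ico t1 t2, φ t * G t * h t ∂μT := by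
    have e0 : ∫ ω, φ (T ω) * Z ω
        * Set.indicator {ω' | t1 ≤ T ω' ∧ T ω' < t2} (fun _ => (1 : ℝ)) ω
        * Set.indicator {ω' | W ω' ≤ T ω' ∧ T ω' ≤ C ω'} (fun _ => (1 : ℝ)) ω ∂μ
        = ∫ ω, F ((Z ω, T ω), (W ω, C ω)) ∂μ :=
      integral_congr_ae (Filter.Eventually.of_forall fun ω => hFcomp ω)
    have e5 : ∫ ω, φ (T ω) * Z ω * Set.indicator (Set.Ico t1 t2) (fun _ => (1:ℝ)) (T ω)
        * G (T ω) ∂μ = ∫ ω, f ω * Z ω ∂μ := by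
      refine integral_congr_ae (Filter.Eventually.of_forall fun ω => ?_)
      simp only [hfdef, hψdef]; ring
    rw [e0, E1, E3, E4, e5, E6, E7, E8]
  -- ====== RHS ======
  set c : ℝ → ℝ≥0 := fun s => (1 / S s).toNNReal with hcdef
  have hcm : Measurable c := (measurable_const.div hSmeas).real_toNNReal
  have hcS : ∀ s ∈ Set.Ico t1 t2, (c s : ℝ) = 1 / S s := by
    intro s hs
    exact Real.coe_toNNReal _ (le_of_lt (one_div_pos.mpr (hSpos s hs)))
  -- rewrite the inner integral w.r.t. μT
  have R1 : ∀ ω, (∫ s in Set.Ico t1 t2,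
        φ s * Set.indicator (Set.Icc (W ω) (min (T ω) (C ω))) (fun _ => (1 : ℝ)) s
          * h s ∂ΛT)
      = ∫ s in Set.Ico t1 t2, (c s : ℝ)
          * (φ s * Set.indicator (Set.Icc (W ω) (min (T ω) (C ω))) (fun _ => (1 : ℝ)) s
            * h s) ∂μT := by
    intro ω
    have hd : (fun s => ENNReal.ofReal (1 / S s)) = fun s => ((c s : ℝ≥0) : ℝ≥0∞) := rfl
    rw [hΛT, hd, restrict_withDensity measurableSet_Ico,
      integral_withDensity_eq_integral_smul hcm]
    simp_rw [NNReal.smul_def, smul_eq_mul]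
  have hRHS1 : ∫ ω, (∫ s in Set.Ico t1 t2,
        φ s * Set.indicator (Set.Icc (W ω) (min (T ω) (C ω))) (fun _ => (1 : ℝ)) s
          * h s ∂ΛT) ∂μ
      = ∫ ω, (∫ s in Set.Ico t1 t2, (c s : ℝ)
          * (φ s * Set.indicator (Set.Icc (W ω) (min (T ω) (C ω))) (fun _ => (1 : ℝ)) s
            * h s) ∂μT) ∂μ :=
    integral_congr_ae (Filter.Eventually.of_forall R1)
  -- joint measurability rewrite of the indicator
  set D : Set (Ω × ℝ) := {p | W p.1 ≤ p.2 ∧ p.2 ≤ T p.1 ∧ p.2 ≤ C p.1} with hDdef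
  have hDmeas : MeasurableSet D :=
    (measurableSet_le (hW.comp measurable_fst) measurable_snd).inter
      ((measurableSet_le measurable_snd (hT.comp measurable_fst)).inter
        (measurableSet_le measurable_snd (hC.comp measurable_fst)))
  have hindD : ∀ (ω : Ω) (s : ℝ),
      Set.indicator (Set.Icc (W ω) (min (T ω) (C ω))) (fun _ => (1 : ℝ)) s
        = Set.indicator D (fun _ => (1 : ℝ)) (ω, s) := by
    intro ω s
    simp only [Set.indicator_apply, Set.mem_Icc, le_min_iff, hDdef, Set.mem_setOf_eq, and_assoc]
  set k : Ω → ℝ → ℝ := fun ω s => (c s : ℝ)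
      * (φ s * Set.indicator D (fun _ => (1 : ℝ)) (ω, s) * h s) with hkdef
  have hkmeas : Measurable (Function.uncurry k) := by
    have : Function.uncurry k = fun p : Ω × ℝ => (c p.2 : ℝ)
        * (φ p.2 * Set.indicator D (fun _ => (1 : ℝ)) p * h p.2) := rfl
    rw [this]
    exact ((hcm.coe_nnreal_real).comp measurable_snd).mul
      (((hφ.comp measurable_snd).mul (measurable_const.indicator hDmeas)).mul
        (hh.comp measurable_snd))
  -- integrability for Fubini
  have hkint : Integrable (Function.uncurry k) (μ.prod (μT.restrict (Set.Ico t1 t2))) := by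
    constructor
    · exact hkmeas.aestronglyMeasurable
    · rw [hasFiniteIntegral_iff_norm]
      have hmeas' : AEMeasurable (fun p : Ω × ℝ => ENNReal.ofReal ‖Function.uncurry k p‖)
          (μ.prod (μT.restrict (Set.Ico t1 t2))) :=
        (hkmeas.norm.ennreal_ofReal).aemeasurable
      rw [lintegral_prod_symm _ hmeas']
      have hinner : ∀ s : ℝ, ∫⁻ ω, ENNReal.ofReal ‖k ω s‖ ∂μ
          = ENNReal.ofReal ((c s : ℝ) * |φ s| * |h s|)
              * μ {ω | W ω ≤ s ∧ s ≤ T ω ∧ s ≤ C ω} := by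
        intro s
        have hfn : (fun ω => ENNReal.ofReal ‖k ω s‖)
            = fun ω => Set.indicator {ω' | W ω' ≤ s ∧ s ≤ T ω' ∧ s ≤ C ω'}
                (fun _ => ENNReal.ofReal ((c s : ℝ) * |φ s| * |h s|)) ω := by
          funext ω
          by_cases hω : W ω ≤ s ∧ s ≤ T ω ∧ s ≤ C ω
          · have hmem : (ω, s) ∈ D := hω
            have hω' : ω ∈ {ω' | W ω' ≤ s ∧ s ≤ T ω' ∧ s ≤ C ω'} := hω
            rw [Set.indicator_of_mem hω']
            simp only [hkdef, Set.indicator_of_mem hmem, mul_one, Real.norm_eq_abs,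
              abs_mul, NNReal.abs_eq]
            congr 1
            ring
          · have hmem : (ω, s) ∉ D := hω
            have hω' : ω ∉ {ω' | W ω' ≤ s ∧ s ≤ T ω' ∧ s ≤ C ω'} := hω
            rw [Set.indicator_of_notMem hω']
            simp [hkdef, Set.indicator_of_notMem hmem]
        rw [hfn, lintegral_indicator_const (hEmeas s)]
      calc ∫⁻ s in Set.Ico t1 t2, (∫⁻ ω, ENNReal.ofReal ‖Function.uncurry k (ω, s)‖ ∂μ) ∂μT
          ≤ ∫⁻ s in Set.Ico t1 t2, ENNReal.ofReal (M * |h s|) ∂μT := by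
            refine setLIntegral_mono ((measurable_const.mul hh.abs).ennreal_ofReal) ?_
            intro s hs
            have heq : (∫⁻ ω, ENNReal.ofReal ‖Function.uncurry k (ω, s)‖ ∂μ)
                = ENNReal.ofReal ((c s : ℝ) * |φ s| * |h s|)
                    * μ {ω | W ω ≤ s ∧ s ≤ T ω ∧ s ≤ C ω} := hinner s
            rw [heq, hkey s, hST s]
            have hb1 : ν₂ (B s) ≤ 1 := prob_le_one
            calc ENNReal.ofReal ((c s : ℝ) * |φ s| * |h s|)
                  * (ν₂ (B s) * ENNReal.ofReal (S s))
                ≤ ENNReal.ofReal ((c s : ℝ) * |φ s| * |h s|)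
                  * (1 * ENNReal.ofReal (S s)) := by gcongr
              _ = ENNReal.ofReal ((c s : ℝ) * |φ s| * |h s|) * ENNReal.ofReal (S s) := by
                  rw [one_mul]
              _ = ENNReal.ofReal (((c s : ℝ) * |φ s| * |h s|) * S s) := by
                  rw [← ENNReal.ofReal_mul (by positivity : (0:ℝ) ≤ (c s : ℝ) * |φ s| * |h s|)]
              _ ≤ ENNReal.ofReal (M * |h s|) := by
                  apply ENNReal.ofReal_le_ofReal
                  rw [hcS s hs]
                  have hSne : S s ≠ 0 := (hSpos s hs).ne'
                  have : 1 / S s * |φ s| * |h s| * S s = |φ s| * |h s| := by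
                    field_simp
                  rw [this]
                  exact mul_le_mul_of_nonneg_right (hφbd s) (abs_nonneg _)
        _ ≤ ∫⁻ s, ENNReal.ofReal (M * |h s|) ∂μT :=
            lintegral_mono' Measure.restrict_le_self le_rfl
        _ < ⊤ := by
            have hint : Integrable (fun s => M * |h s|) μT := hh_int.abs.const_mul M
            have hfin := hint.hasFiniteIntegral
            rw [hasFiniteIntegral_iff_norm] at hfin
            refine lt_of_le_of_lt (lintegral_mono fun s => ?_) hfin
            exact ENNReal.ofReal_le_ofReal (le_abs_self _)
  -- rewrite inner integrand as k
  have hRHS2 : ∫ ω, (∫ s in Set.Ico t1 t2, (c s : ℝ)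
        * (φ s * Set.indicator (Set.Icc (W ω) (min (T ω) (C ω))) (fun _ => (1 : ℝ)) s
          * h s) ∂μT) ∂μ
      = ∫ ω, (∫ s in Set.Ico t1 t2, k ω s ∂μT) ∂μ := by
    refine integral_congr_ae (Filter.Eventually.of_forall fun ω => ?_)
    refine integral_congr_ae (Filter.Eventually.of_forall fun s => ?_)
    exact congrArg (fun x => (c s : ℝ) * (φ s * x * h s)) (hindD ω s)
  have hswap : ∫ ω, (∫ s in Set.Ico t1 t2, k ω s ∂μT) ∂μ
      = ∫ s in Set.Ico t1 t2, (∫ ω, k ω s ∂μ) ∂μT := integral_integral_swap hkint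
  have hinnerInt : ∀ s : ℝ, ∫ ω, k ω s ∂μ
      = ((c s : ℝ) * φ s * h s) * (μ {ω | W ω ≤ s ∧ s ≤ T ω ∧ s ≤ C ω}).toReal := by
    intro s
    have hfn : (fun ω => k ω s) = fun ω => ((c s : ℝ) * φ s * h s)
        * Set.indicator {ω' | W ω' ≤ s ∧ s ≤ T ω' ∧ s ≤ C ω'} (fun _ => (1:ℝ)) ω := by
      funext ω
      by_cases hω : W ω ≤ s ∧ s ≤ T ω ∧ s ≤ C ω
      · have hmem : (ω, s) ∈ D := hω
        have hω' : ω ∈ {ω' | W ω' ≤ s ∧ s ≤ T ω' ∧ s ≤ C ω'} := hω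
        rw [Set.indicator_of_mem hω']
        simp only [hkdef, Set.indicator_of_mem hmem, mul_one]
        ring
      · have hmem : (ω, s) ∉ D := hω
        have hω' : ω ∉ {ω' | W ω' ≤ s ∧ s ≤ T ω' ∧ s ≤ C ω'} := hω
        rw [Set.indicator_of_notMem hω']
        simp [hkdef, Set.indicator_of_notMem hmem]
    rw [hfn, integral_const_mul, integral_indicator_const (1:ℝ) (hEmeas s)]
    simp [smul_eq_mul, Measure.real]
  have hfin : ∫ s in Set.Ico t1 t2, (∫ ω, k ω s ∂μ) ∂μT
      = ∫ s in Set.Ico t1 t2, φ s * G s * h s ∂μT := by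
    refine setIntegral_congr_fun measurableSet_Ico fun s hs => ?_
    rw [hinnerInt s]
    have h1 : (μ {ω | W ω ≤ s ∧ s ≤ T ω ∧ s ≤ C ω}).toReal = G s * S s := by
      rw [hkey s, hST s, ENNReal.toReal_mul,
        ENNReal.toReal_ofReal (le_of_lt (hSpos s hs))]
    rw [h1, hcS s hs]
    have hSne : S s ≠ 0 := (hSpos s hs).ne'
    field_simp
  rw [hLHS, hRHS1, hRHS2, hswap, hfin]
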